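/- For every integer n ≥ 2 and every B > 0, there exist a simple derivation D of ℂ[x,y], a ℂ-algebra automorphism ρ of ℂ[x,y], and a nonzero constant c ∈ ℂ such that: ρ ∘ D ∘ ρ⁻¹ = c • D, the order of ρ in the automorphism group is exactly n, and the degree of ρ, namely max(totalDegree ρ(x), totalDegree ρ(y)), is greater than B. -/

import Mathlib

noncomputable section OneVar

abbrev Apoly := Polynomial ℂ
abbrev Rpoly := Polynomial Apoly

namespace AuxPF
open Polynomial

open Polynomial

/-! ### One-variable auxiliary results -/

/-- coefficientwise `d/dx` on `ℂ[x][y]` -/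
def Dx (f : Rpoly) : Rpoly :=
  ⟨.ofCoeff (f.toFinsupp.coeff.mapRange (fun c => derivative c) (map_zero _))⟩

lemma coeff_Dx (f : Rpoly) (k : ℕ) : (Dx f).coeff k = derivative (f.coeff k) := by
  rcases f with ⟨f⟩
  simp [Dx, Polynomial.coeff, Finsupp.mapRange_apply]

lemma Dx_add (f g : Rpoly) : Dx (f + g) = Dx f + Dx g := by
  ext k; simp [coeff_Dx]

lemma Dx_C (p : Apoly) : Dx (C p) = C (derivative p) := by
  ext k
  simp only [coeff_Dx, coeff_C]
  split_ifs <;> simp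

lemma Dx_X_mul (f : Rpoly) : Dx (X * f) = X * Dx f := by
  ext k
  cases k with
  | zero => simp [coeff_Dx, mul_coeff_zero]
  | succ k => simp [coeff_Dx, coeff_X_mul]

lemma D_C (D : Derivation ℂ Rpoly Rpoly) (hDC : D (C X) = 1) (p : Apoly) :
    D (C p) = C (derivative p) := by
  induction p using Polynomial.induction_on with
  | C c =>
    have : (C (Polynomial.C c) : Rpoly) = algebraMap ℂ Rpoly c := rfl
    simp only [this, Derivation.map_algebraMap, derivative_C, map_zero]
  | add p q hp hq => simp [hp, hq]
  | monomial k c hk =>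
    have h1 : (C (Polynomial.C c * X ^ (k + 1)) : Rpoly)
        = C X * C (Polynomial.C c * X ^ k) := by
      rw [← map_mul]; ring_nf
    rw [h1, D.leibniz]
    have h2 : derivative (Polynomial.C c * X ^ (k + 1))
        = Polynomial.C c * X ^ k + X * derivative (Polynomial.C c * X ^ k) := by
      have : Polynomial.C c * X ^ (k + 1) = X * (Polynomial.C c * X ^ k) := by ring
      rw [this, derivative_mul, derivative_X]; ring
    rw [h2, hk, hDC]
    simp only [smul_eq_mul, map_add, map_mul]
    ring

lemma D_eq (D : Derivation ℂ Rpoly Rpoly) (q : Rpoly) (hDX : D X = q) (hDC : D (C X) = 1)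
    (f : Rpoly) : D f = Dx f + q * derivative f := by
  induction f using Polynomial.induction_on with
  | C p => rw [D_C D hDC, Dx_C]; simp
  | add p r hp hr => rw [map_add, hp, hr, Dx_add, derivative_add]; ring
  | monomial k c hk =>
    have h1 : (C c * X ^ (k + 1) : Rpoly) = X * (C c * X ^ k) := by ring
    rw [h1, D.leibniz, hDX, hk, Dx_X_mul]
    simp only [smul_eq_mul, derivative_mul, derivative_X]
    ring

/-- The linear ODE `w' = x^a w + μ` (`a ≥ 1`, `μ ≠ 0`) has no rational solution `w = Q/P`. -/
lemma key_ode (a : ℕ) (ha : 1 ≤ a) (μ : ℂ) (hμ : μ ≠ 0) (P Q : Polynomial ℂ) (hP : P ≠ 0) :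
    P * derivative Q - derivative P * Q ≠ X ^ a * (P * Q) - C μ * P ^ 2 := by
  intro E
  rcases eq_or_ne Q 0 with rfl | hQ
  · simp only [derivative_zero, mul_zero, zero_mul, sub_zero, zero_sub, sub_self] at E
    exact (mul_ne_zero (fun h => hμ (C_eq_zero.mp h)) (pow_ne_zero 2 hP)) (by linear_combination E)
  · set g := GCDMonoid.gcd P Q with hg
    have hgne : g ≠ 0 := gcd_ne_zero_of_right hQ
    set P₁ := P / g with hP1def
    set Q₁ := Q / g with hQ1def
    have hP1 : P = g * P₁ := (EuclideanDomain.mul_div_cancel' hgne (gcd_dvd_left P Q)).symm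
    have hQ1 : Q = g * Q₁ := (EuclideanDomain.mul_div_cancel' hgne (gcd_dvd_right P Q)).symm
    have hco : IsCoprime P₁ Q₁ := isCoprime_div_gcd_div_gcd hQ
    have hP10 : P₁ ≠ 0 := right_ne_zero_of_mul (hP1 ▸ hP)
    rw [hP1, hQ1, derivative_mul, derivative_mul] at E
    have E₁ : P₁ * derivative Q₁ - derivative P₁ * Q₁ = X ^ a * (P₁ * Q₁) - C μ * P₁ ^ 2 :=
      mul_left_cancel₀ (pow_ne_zero 2 hgne) (by ring_nf; ring_nf at E; linear_combination E)
    have hdvd : P₁ ∣ derivative P₁ * Q₁ :=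
      ⟨derivative Q₁ - X ^ a * Q₁ + C μ * P₁, by linear_combination -E₁⟩
    have hPP : P₁ ∣ derivative P₁ := hco.dvd_of_dvd_mul_right hdvd
    have hdeg0 : P₁.natDegree = 0 := by
      by_contra h
      have h1 : derivative P₁ ≠ 0 := fun hd => h (natDegree_eq_zero_of_derivative_eq_zero hd)
      have h2 : P₁.natDegree ≤ (derivative P₁).natDegree :=
        natDegree_le_natDegree (degree_le_of_dvd hPP h1)
      have h3 := natDegree_derivative_lt h
      omega
    obtain ⟨c, hc⟩ := natDegree_eq_zero.mp hdeg0
    have hc0 : c ≠ 0 := fun h => hP10 (by rw [← hc, h, map_zero])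
    have E₂ : derivative Q₁ = X ^ a * Q₁ - C (μ * c) := by
      have := E₁
      rw [← hc] at this
      have h4 : C c * derivative Q₁ = C c * (X ^ a * Q₁ - C (μ * c)) := by
        simp only [derivative_C] at this
        rw [map_mul]
        linear_combination this
      exact mul_left_cancel₀ (fun h => hc0 (C_eq_zero.mp h)) h4
    have hQ10 : Q₁ ≠ 0 := right_ne_zero_of_mul (hQ1 ▸ hQ)
    set d := Q₁.natDegree with hd
    have hlhs : (derivative Q₁).coeff (a + d) = 0 := by
      rw [coeff_derivative, coeff_eq_zero_of_natDegree_lt (by omega), zero_mul]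
    have hrhs : (X ^ a * Q₁ - C (μ * c)).coeff (a + d) = Q₁.leadingCoeff := by
      rw [coeff_sub, coeff_C, if_neg (by omega), add_comm, coeff_X_pow_mul]
      rw [leadingCoeff, hd]; exact sub_zero _
    rw [E₂, hrhs] at hlhs
    exact leadingCoeff_ne_zero.mpr hQ10 hlhs

end AuxPF

/-! ### Conjugation of derivations -/

def conjDer {A B : Type} [CommRing A] [CommRing B] [Algebra ℂ A] [Algebra ℂ B]
    (e : A ≃ₐ[ℂ] B) (D : Derivation ℂ A A) : Derivation ℂ B B where
  toLinearMap := e.toLinearMap ∘ₗ D.toLinearMap ∘ₗ e.symm.toLinearMap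
  map_one_eq_zero' := by simp
  leibniz' a b := by
    simp only [LinearMap.coe_comp, Function.comp_apply, AlgEquiv.toLinearMap_apply,
      Derivation.coeFn_coe, map_mul, Derivation.leibniz, smul_eq_mul, map_add,
      AlgEquiv.apply_symm_apply]

lemma conjDer_apply {A B : Type} [CommRing A] [CommRing B] [Algebra ℂ A] [Algebra ℂ B]
    (e : A ≃ₐ[ℂ] B) (D : Derivation ℂ A A) (b : B) :
    conjDer e D b = e (D (e.symm b)) := rfl

def SimpleD {A : Type} [CommRing A] [Algebra ℂ A] (D : Derivation ℂ A A) : Prop :=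
  ∀ I : Ideal A, (∀ a ∈ I, D a ∈ I) → I = ⊥ ∨ I = ⊤

lemma simpleD_conj {A B : Type} [CommRing A] [CommRing B] [Algebra ℂ A] [Algebra ℂ B]
    (e : A ≃ₐ[ℂ] B) {D : Derivation ℂ A A} (hD : SimpleD D) : SimpleD (conjDer e D) := by
  intro I hI
  have h0 := hD (I.comap (e : A →+* B)) (fun x hx => by
    have : conjDer e D (e x) ∈ I := hI _ hx
    rwa [conjDer_apply, e.symm_apply_apply, Ideal.mem_comap] at *)
  rcases h0 with h | h
  · left
    ext x
    simp only [Ideal.mem_bot]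
    constructor
    · intro hx
      have : e.symm x ∈ I.comap (e : A →+* B) := by
        rw [Ideal.mem_comap]; simpa using hx
      rw [h, Ideal.mem_bot] at this
      have := congrArg e this
      simpa using this
    · rintro rfl; exact I.zero_mem
  · right
    rw [Ideal.eq_top_iff_one]
    have : (1 : A) ∈ I.comap (e : A →+* B) := by rw [h]; trivial
    rw [Ideal.mem_comap] at this
    simpa using this

/-! ### The main simplicity result in `ℂ[x][y]` -/

open Polynomial in
/-- Any derivation of `ℂ[x][y]` with `D y = x^a y + 1` and `D x = 1` is simple
(Shamsuddin's criterion for `y' = x^a y + 1`). -/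
lemma main_simple (a : ℕ) (ha : 1 ≤ a) (D : Derivation ℂ Rpoly Rpoly)
    (hDX : D X = C (X ^ a) * X + 1) (hDC : D (C X) = 1) : SimpleD D := by
  classical
  have hXmul : ∀ (p : Rpoly) (k : ℕ), (X * derivative p).coeff k = p.coeff k * (k : Apoly) := by
    intro p k
    cases k with
    | zero => simp [mul_coeff_zero]
    | succ j => rw [coeff_X_mul, coeff_derivative]; push_cast; ring
  have hcoeffD : ∀ (f : Rpoly) (k : ℕ),
      (D f).coeff k = derivative (f.coeff k) + X ^ a * (f.coeff k * (k : Apoly))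
        + (derivative f).coeff k := by
    intro f k
    rw [AuxPF.D_eq D _ hDX hDC, coeff_add, AuxPF.coeff_Dx]
    have hsplit : (C (X ^ a) * X + 1) * derivative f
        = C (X ^ a) * (X * derivative f) + derivative f := by ring
    rw [hsplit, coeff_add, coeff_C_mul, hXmul]
    ring
  intro K hK
  by_cases hbot : K = ⊥
  · exact Or.inl hbot
  right
  obtain ⟨f₀, hf₀K, hf₀⟩ := Submodule.exists_mem_ne_zero_of_ne_bot hbot
  have hex : ∃ k, ∃ f, f ∈ K ∧ f ≠ 0 ∧ f.natDegree = k := ⟨_, f₀, hf₀K, hf₀, rfl⟩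
  obtain ⟨f, hfK, hf0, hfm⟩ := Nat.find_spec hex
  set m := Nat.find hex with hmdef
  have hmin : ∀ g, g ∈ K → g ≠ 0 → m ≤ g.natDegree :=
    fun g hg hg0 => Nat.find_min' hex ⟨g, hg, hg0, rfl⟩
  rcases Nat.eq_zero_or_pos m with hm0 | hmpos
  · -- case m = 0 : f is a constant (in y); get a unit of K
    have hfC : f = C (f.coeff 0) := eq_C_of_natDegree_eq_zero (by omega)
    have hexA : ∃ k, ∃ p : Apoly, C p ∈ K ∧ p ≠ 0 ∧ p.natDegree = k :=
      ⟨_, f.coeff 0, by rwa [← hfC], fun h => hf0 (by rw [hfC, h, map_zero]), rfl⟩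
    obtain ⟨p, hpK, hp0, hpd⟩ := Nat.find_spec hexA
    by_cases hpdeg : p.natDegree = 0
    · obtain ⟨c, hc⟩ := natDegree_eq_zero.mp hpdeg
      have hc0 : c ≠ 0 := fun h => hp0 (by rw [← hc, h, map_zero])
      refine Ideal.eq_top_of_isUnit_mem K hpK ?_
      rw [← hc]
      exact isUnit_C.mpr (isUnit_C.mpr hc0.isUnit)
    · exfalso
      have hder : D (C p) = C (derivative p) := AuxPF.D_C D hDC p
      have hd0 : derivative p ≠ 0 := fun h => hpdeg (natDegree_eq_zero_of_derivative_eq_zero h)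
      have hmem : C (derivative p) ∈ K := hder ▸ hK _ hpK
      have hle := Nat.find_min' hexA ⟨derivative p, hmem, hd0, rfl⟩
      have hlt := natDegree_derivative_lt hpdeg
      omega
  · -- case m ≥ 1 : produce a rational solution of the ODE, contradiction
    exfalso
    obtain ⟨mm, hmm⟩ : ∃ mm, m = mm + 1 := ⟨m - 1, by omega⟩
    set P := f.coeff m with hPdef
    set Q := f.coeff mm with hQdef
    have hP0 : P ≠ 0 := fun h => hf0 (leadingCoeff_eq_zero.mp (by rwa [leadingCoeff, hfm]))
    have hfm1 : f.coeff (m + 1) = 0 := coeff_eq_zero_of_natDegree_lt (by omega)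
    set h : Apoly := derivative P + X ^ a * (P * (m : Apoly)) with hhdef
    have hDfm : (D f).coeff m = h := by
      rw [hcoeffD, coeff_derivative, hfm1, zero_mul, add_zero]
    have hDfdeg : (D f).natDegree ≤ m := by
      rw [natDegree_le_iff_coeff_eq_zero]
      intro N hN
      have h1 : f.coeff N = 0 := coeff_eq_zero_of_natDegree_lt (by omega)
      have h2 : f.coeff (N + 1) = 0 := coeff_eq_zero_of_natDegree_lt (by omega)
      rw [hcoeffD, coeff_derivative, h1, h2]
      simp
    set g := C P * D f - C h * f with hgdef
    have hgK : g ∈ K := Ideal.sub_mem K (Ideal.mul_mem_left K _ (hK f hfK))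
      (Ideal.mul_mem_left K _ hfK)
    have hgdeg : g.natDegree ≤ m :=
      le_trans (natDegree_sub_le _ _) (max_le
        (le_trans (natDegree_C_mul_le _ _) hDfdeg)
        (le_trans (natDegree_C_mul_le _ _) hfm.le))
    have hgm0 : g.coeff m = 0 := by
      rw [hgdef, coeff_sub, coeff_C_mul, coeff_C_mul, hDfm, ← hPdef]
      ring
    have hg0 : g = 0 := by
      by_contra hgne
      have hge : m ≤ g.natDegree := hmin g hgK hgne
      have hgd : g.natDegree = m := le_antisymm hgdeg hge
      exact hgne (leadingCoeff_eq_zero.mp (by rw [leadingCoeff, hgd]; exact hgm0))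
    have E0 : P * (D f).coeff mm = h * Q := by
      have := congrArg (fun p => Polynomial.coeff p mm) hg0
      simp only [hgdef, coeff_sub, coeff_C_mul, coeff_zero] at this
      rw [hQdef]
      linear_combination this
    have hDfmm : (D f).coeff mm = derivative Q + X ^ a * (Q * (mm : Apoly)) + P * (m : Apoly) := by
      rw [hcoeffD, coeff_derivative]
      have : mm + 1 = m := hmm.symm
      rw [this, ← hPdef]
      push_cast [hmm]
      ring
    rw [hDfmm, hhdef] at E0
    have hμ : ((m : ℂ)) ≠ 0 := Nat.cast_ne_zero.mpr (by omega)
    refine AuxPF.key_ode a ha (m : ℂ) hμ P Q hP0 ?_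
    have hM : (m : Apoly) = (mm : Apoly) + 1 := by push_cast [hmm]; ring
    rw [Polynomial.C_eq_natCast]
    linear_combination E0 + (X ^ a * P * Q) * hM



end OneVar

open MvPolynomial

/-- The polynomial ring `ℂ[x,y]`. -/
abbrev Rxy : Type := MvPolynomial (Fin 2) ℂ

/-- A derivation of `ℂ[x,y]` is simple if the only ideals `I` with `D(I) ⊆ I`
are the zero ideal and the whole ring. -/
def IsSimpleDer (D : Derivation ℂ Rxy Rxy) : Prop :=
  ∀ I : Ideal Rxy, (∀ a ∈ I, D a ∈ I) → I = ⊥ ∨ I = ⊤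



noncomputable section AuxMv

/-! ### The isomorphism `ℂ[X0,X1] ≃ ℂ[x][y]`, with `X 0 ↦ y`, `X 1 ↦ x` -/

def eIso : Rxy ≃ₐ[ℂ] Rpoly := by
  refine AlgEquiv.ofAlgHom
    (aeval ![Polynomial.X, Polynomial.C Polynomial.X])
    (Polynomial.aevalTower (Polynomial.aevalTower (Algebra.ofId ℂ Rxy) (X 1)) (X 0))
    ?_ ?_
  · ext : 1
    · ext : 1
      simp [Polynomial.aevalTower_X, Polynomial.aevalTower_C]
    · simp [Polynomial.aevalTower_X]
  · apply MvPolynomial.algHom_ext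
    intro i
    fin_cases i <;> simp [Polynomial.aevalTower_X, Polynomial.aevalTower_C]

lemma eIso_X0 : eIso (X 0) = Polynomial.X := by simp [eIso]
lemma eIso_X1 : eIso (X 1) = Polynomial.C Polynomial.X := by simp [eIso]
lemma eIso_symm_X : eIso.symm Polynomial.X = X 0 := by
  rw [← eIso_X0, AlgEquiv.symm_apply_apply]
lemma eIso_symm_CX : eIso.symm (Polynomial.C Polynomial.X) = X 1 := by
  rw [← eIso_X1, AlgEquiv.symm_apply_apply]

/-! ### Automorphisms of `ℂ[X0,X1]` -/

def mkAut (f g : Fin 2 → Rxy) (h1 : ∀ i, aeval f (g i) = X i) (h2 : ∀ i, aeval g (f i) = X i) :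
    Rxy ≃ₐ[ℂ] Rxy :=
  AlgEquiv.ofAlgHom (aeval f) (aeval g)
    (by apply MvPolynomial.algHom_ext; intro i; simpa using h1 i)
    (by apply MvPolynomial.algHom_ext; intro i; simpa using h2 i)

lemma mkAut_apply (f g h1 h2) (p : Rxy) : mkAut f g h1 h2 p = aeval f p := rfl

lemma mkAut_symm_apply (f g h1 h2) (p : Rxy) : (mkAut f g h1 h2).symm p = aeval g p := rfl

@[simp] lemma mkAut_X (f g h1 h2) (i : Fin 2) : mkAut f g h1 h2 (X i) = f i := by
  rw [mkAut_apply, aeval_X]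

@[simp] lemma mkAut_symm_X (f g h1 h2) (i : Fin 2) : (mkAut f g h1 h2).symm (X i) = g i := by
  rw [mkAut_symm_apply, aeval_X]

lemma algEquiv_ext_X {e₁ e₂ : Rxy ≃ₐ[ℂ] Rxy} (h : ∀ i, e₁ (X i) = e₂ (X i)) : e₁ = e₂ := by
  have : (e₁ : Rxy →ₐ[ℂ] Rxy) = (e₂ : Rxy →ₐ[ℂ] Rxy) := MvPolynomial.algHom_ext h
  exact AlgEquiv.coe_algHom_injective this

lemma aeval_C' (f : Fin 2 → Rxy) (r : ℂ) : aeval f (C r) = C r := by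
  rw [aeval_C, algebraMap_eq]

/-- scaling automorphism `X i ↦ u • X i` -/
def scEq (u : ℂˣ) : Rxy ≃ₐ[ℂ] Rxy :=
  mkAut (fun i => C (u : ℂ) * X i) (fun i => C ((u⁻¹ : ℂˣ) : ℂ) * X i)
    (by intro i
        rw [map_mul, aeval_C', aeval_X, ← mul_assoc, ← C_mul, Units.inv_mul, C_1, one_mul])
    (by intro i
        rw [map_mul, aeval_C', aeval_X, ← mul_assoc, ← C_mul, Units.mul_inv, C_1, one_mul])

@[simp] lemma scEq_C (u : ℂˣ) (r : ℂ) : scEq u (C r) = C r := by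
  rw [scEq, mkAut_apply, aeval_C']

@[simp] lemma scEq_X (u : ℂˣ) (i : Fin 2) : scEq u (X i) = C (u : ℂ) * X i := by
  rw [scEq, mkAut_X]

@[simp] lemma scEq_symm_X (u : ℂˣ) (i : Fin 2) :
    (scEq u).symm (X i) = C ((u⁻¹ : ℂˣ) : ℂ) * X i := by
  rw [scEq, mkAut_symm_X]

lemma scEq_mul (u v : ℂˣ) : scEq (u * v) = scEq u * scEq v := by
  apply algEquiv_ext_X
  intro i
  show _ = scEq u (scEq v (X i))
  rw [scEq_X, scEq_X, map_mul, scEq_X, scEq, mkAut_apply, aeval_C', ← mul_assoc, ← C_mul,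
    Units.val_mul, mul_comm ((v : ℂ)) _]

lemma scEq_one : scEq 1 = 1 := by
  apply algEquiv_ext_X
  intro i
  show _ = X i
  rw [scEq_X, Units.val_one, C_1, one_mul]

lemma scEq_pow (u : ℂˣ) (k : ℕ) : scEq u ^ k = scEq (u ^ k) := by
  induction k with
  | zero => simp [scEq_one]
  | succ k ih => rw [pow_succ, pow_succ, ih, ← scEq_mul, mul_comm]

lemma scEq_eq_one_iff (u : ℂˣ) : scEq u = 1 ↔ u = 1 := by
  constructor
  · intro h
    have h0 := congrArg (fun e : Rxy ≃ₐ[ℂ] Rxy => e (X 0)) h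
    simp only [scEq_X] at h0
    have hC : (C (u : ℂ) : Rxy) = C 1 := by
      have hx : (X 0 : Rxy) ≠ 0 := X_ne_zero 0
      have : (C (u : ℂ) : Rxy) * X 0 = C 1 * X 0 := by simpa using h0
      exact mul_right_cancel₀ hx this
    exact Units.ext (C_injective _ _ hC)
  · rintro rfl; exact scEq_one

lemma orderOf_scEq (u : ℂˣ) (n : ℕ) (hn : 0 < n) (hu : u ^ n = 1)
    (hmin : ∀ k, 0 < k → k < n → u ^ k ≠ 1) : orderOf (scEq u) = n := by
  rw [orderOf_eq_iff hn]
  constructor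
  · rw [scEq_pow, hu, scEq_one]
  · intro k hk hk0 h
    exact hmin k hk0 hk (by rwa [scEq_pow, scEq_eq_one_iff] at h)

/-- shear automorphism `X 0 ↦ X 0 + X 1 ^ m` -/
def shear (m : ℕ) : Rxy ≃ₐ[ℂ] Rxy :=
  mkAut ![X 0 + X 1 ^ m, X 1] ![X 0 - X 1 ^ m, X 1]
    (by intro i; fin_cases i <;> simp)
    (by intro i; fin_cases i <;> simp)

@[simp] lemma shear_C (m : ℕ) (r : ℂ) : shear m (C r) = C r := by
  rw [shear, mkAut_apply, aeval_C']

@[simp] lemma shear_X0 (m : ℕ) : shear m (X 0) = X 0 + X 1 ^ m := by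
  rw [shear, mkAut_X]; rfl
@[simp] lemma shear_X1 (m : ℕ) : shear m (X 1) = X 1 := by
  rw [shear, mkAut_X]; rfl
@[simp] lemma shear_symm_X0 (m : ℕ) : (shear m).symm (X 0) = X 0 - X 1 ^ m := by
  rw [shear, mkAut_symm_X]; rfl
@[simp] lemma shear_symm_X1 (m : ℕ) : (shear m).symm (X 1) = X 1 := by
  rw [shear, mkAut_symm_X]; rfl

/-! ### The derivation `D₀ = (x^a y + 1) ∂_y + ∂_x` -/

def D₀ (a : ℕ) : Derivation ℂ Rxy Rxy := mkDerivation ℂ ![X 1 ^ a * X 0 + 1, 1]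

@[simp] lemma D₀_X0 (a : ℕ) : D₀ a (X 0) = X 1 ^ a * X 0 + 1 := by
  rw [D₀, mkDerivation_X]; rfl
@[simp] lemma D₀_X1 (a : ℕ) : D₀ a (X 1) = 1 := by
  rw [D₀, mkDerivation_X]; rfl




end AuxMv

/-- For every `n ≥ 2` and `B > 0` there is a simple derivation `D` of `ℂ[x,y]` and
an automorphism `ρ` preserving the associated foliation (`ρ ∘ D ∘ ρ⁻¹ = c • D`, `c ≠ 0`)
of order exactly `n` and of degree greater than `B`. -/
theorem exists_simple_derivation_with_symmetry (n : ℕ) (hn : 2 ≤ n) (B : ℕ) (hB : 0 < B) :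
    ∃ (D : Derivation ℂ Rxy Rxy) (ρ : Rxy ≃ₐ[ℂ] Rxy) (c : ℂ),
      IsSimpleDer D ∧ c ≠ 0 ∧ (∀ a : Rxy, ρ (D (ρ.symm a)) = c • D a) ∧
      orderOf ρ = n ∧
      B < max (ρ (X 0)).totalDegree (ρ (X 1)).totalDegree := by
  have hn0 : n ≠ 0 := by omega
  set a := n - 1 with ha_def
  have ha : 1 ≤ a := by omega
  have han : a + 1 = n := by omega
  set ζ := Complex.exp (2 * Real.pi * Complex.I / n) with hζdef
  have hζ : IsPrimitiveRoot ζ n := Complex.isPrimitiveRoot_exp n hn0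
  have hζn : ζ ^ n = 1 := hζ.pow_eq_one
  have hζ0 : ζ ≠ 0 := by
    intro h
    rw [h, zero_pow hn0] at hζn
    exact zero_ne_one hζn
  set u : ℂˣ := Units.mk0 ζ hζ0 with hu
  have hv : ((u⁻¹ : ℂˣ) : ℂ) = ζ⁻¹ := by rw [hu]; simp
  have hw : ((u : ℂˣ) : ℂ) = ζ := rfl
  set m := n * (B + 1) with hm
  have hmB : B < m := by
    have : 2 * (B + 1) ≤ n * (B + 1) := Nat.mul_le_mul_right _ hn
    omega
  have hζm : ζ ^ m = 1 := by rw [hm, pow_mul, hζn, one_pow]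
  set σ := shear m with hσ
  set ρ₀ := scEq u with hρ₀
  set D : Derivation ℂ Rxy Rxy := conjDer σ (D₀ a) with hD
  set ρ : Rxy ≃ₐ[ℂ] Rxy := σ.symm.trans (ρ₀.trans σ) with hρ
  -- the base conjugation identity
  have hDC0 : ∀ r : ℂ, D₀ a (C r) = 0 := by
    intro r
    rw [← MvPolynomial.algebraMap_eq]
    exact Derivation.map_algebraMap (D₀ a) r
  have hζa : ζ ^ a * ζ = 1 := by rw [← pow_succ, han, hζn]
  have hsm : ∀ p : Rxy, (ζ⁻¹ • D₀ a) p = C ζ⁻¹ * D₀ a p := fun p => by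
    rw [show ((ζ⁻¹ • D₀ a) p) = ζ⁻¹ • (D₀ a p) from rfl, MvPolynomial.smul_eq_C_mul]
  have hbase : conjDer ρ₀ (D₀ a) = ζ⁻¹ • D₀ a := by
    apply MvPolynomial.derivation_ext
    have hb0 : conjDer ρ₀ (D₀ a) (X 0) = (ζ⁻¹ • D₀ a) (X 0) := by
      rw [conjDer_apply, hρ₀, scEq_symm_X, Derivation.leibniz, hDC0, smul_zero, add_zero,
        smul_eq_mul, D₀_X0, map_mul, scEq_C, map_add, map_mul, map_pow, scEq_X, scEq_X, map_one,
        hsm, D₀_X0, hw, hv]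
      have key : (C ζ * X 1 : Rxy) ^ a * (C ζ * X 0) = C (ζ ^ a * ζ) * (X 1 ^ a * X 0) := by
        rw [C_mul, mul_pow, ← C_pow]; ring
      rw [key, hζa, C_1, one_mul]
    have hb1 : conjDer ρ₀ (D₀ a) (X 1) = (ζ⁻¹ • D₀ a) (X 1) := by
      rw [conjDer_apply, hρ₀, scEq_symm_X, Derivation.leibniz, hDC0, smul_zero, add_zero,
        smul_eq_mul, D₀_X1, mul_one, scEq_C, hsm, D₀_X1, mul_one, hv]
    intro i
    fin_cases i
    · exact hb0
    · exact hb1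
  refine ⟨D, ρ, ζ⁻¹, ?_, inv_ne_zero hζ0, ?_, ?_, ?_⟩
  · -- simplicity
    have hX : conjDer eIso (D₀ a) Polynomial.X
        = Polynomial.C (Polynomial.X ^ a) * Polynomial.X + 1 := by
      rw [conjDer_apply, eIso_symm_X, D₀_X0, map_add, map_mul, map_pow, eIso_X0, eIso_X1,
        map_one, Polynomial.C_pow]
    have hCx : conjDer eIso (D₀ a) (Polynomial.C Polynomial.X) = 1 := by
      rw [conjDer_apply, eIso_symm_CX, D₀_X1, map_one]
    have h1 : SimpleD (conjDer eIso (D₀ a)) := main_simple a ha _ hX hCx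
    have h2 : SimpleD (D₀ a) := by
      have h2' := simpleD_conj eIso.symm h1
      have hEq : conjDer eIso.symm (conjDer eIso (D₀ a)) = D₀ a := by
        ext p
        simp [conjDer_apply]
      rwa [hEq] at h2'
    intro I hI
    exact simpleD_conj σ h2 I hI
  · -- conjugation identity
    intro p
    have hρap : ∀ q, ρ q = σ (ρ₀ (σ.symm q)) := fun q => rfl
    have hρsap : ∀ q, ρ.symm q = σ (ρ₀.symm (σ.symm q)) := fun q => rfl
    have e1 : D (ρ.symm p) = σ (D₀ a (ρ₀.symm (σ.symm p))) := by
      rw [hρsap, hD, conjDer_apply, AlgEquiv.symm_apply_apply]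
    have e2 : ρ₀ (D₀ a (ρ₀.symm (σ.symm p))) = ζ⁻¹ • D₀ a (σ.symm p) := by
      have h3 := congrArg (fun E : Derivation ℂ Rxy Rxy => E (σ.symm p)) hbase
      simpa [conjDer_apply] using h3
    rw [e1, hρap, AlgEquiv.symm_apply_apply, e2, map_smul, hD, conjDer_apply]
  · -- order
    have hun : u ^ n = 1 := Units.ext (by rw [Units.val_pow_eq_pow_val, hw, hζn, Units.val_one])
    have hord0 : orderOf ρ₀ = n := by
      apply orderOf_scEq u n (by omega) hun
      intro k hk0 hkn hk1
      exact hζ.pow_ne_one_of_pos_of_lt hk0.ne' hkn (by simpa [hw] using congrArg Units.val hk1)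
    have hconj : ρ = (MulAut.conj σ) ρ₀ := by
      apply algEquiv_ext_X
      intro i
      rfl
    rw [hconj, ← hord0]
    exact orderOf_injective (MulAut.conj σ).toMonoidHom (MulAut.conj σ).injective ρ₀
  · -- degree
    have hρX0 : ρ (X 0) = C ζ * X 0 + C (ζ - 1) * X 1 ^ m := by
      show σ (ρ₀ (σ.symm (X 0))) = _
      rw [hσ, hρ₀, shear_symm_X0, map_sub, scEq_X, map_pow, scEq_X, hw, map_sub, map_mul, shear_C,
        shear_X0, map_pow, map_mul, shear_C, shear_X1, mul_pow, ← C_pow, hζm, C_1, one_mul,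
        C_sub, C_1]
      ring
    have hm0 : m ≠ 0 := by omega
    have hne : ζ - 1 ≠ 0 := by
      refine sub_ne_zero.mpr ?_
      intro h
      exact hζ.pow_ne_one_of_pos_of_lt one_ne_zero (by omega) (by rw [pow_one, h])
    have hsingle : Finsupp.single (0 : Fin 2) 1 ≠ Finsupp.single (1 : Fin 2) m := by
      intro h
      have := DFunLike.congr_fun h 0
      simp [Finsupp.single_apply] at this
    have hcoeff : MvPolynomial.coeff (Finsupp.single 1 m) (ρ (X 0)) = ζ - 1 := by
      rw [hρX0, MvPolynomial.coeff_add, MvPolynomial.coeff_C_mul, MvPolynomial.coeff_C_mul,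
        X_pow_eq_monomial, MvPolynomial.coeff_monomial, if_pos rfl, MvPolynomial.coeff_X',
        if_neg hsingle]
      ring
    have hsup : Finsupp.single (1 : Fin 2) m ∈ (ρ (X 0)).support := by
      rw [MvPolynomial.mem_support_iff, hcoeff]
      exact hne
    have hdeg : m ≤ (ρ (X 0)).totalDegree := by
      have h5 := MvPolynomial.le_totalDegree hsup
      simpa using h5
    exact lt_of_lt_of_le (lt_of_lt_of_le hmB hdeg) (le_max_left _ _)
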